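/- Let S be a commutative ring, F a formal group law over S, n ≥ 2, and 1 ≤ i ≤ n−1. Then the elements ξ, ξ' ∈ A = R ⊗_{R^{s_i}} R satisfy μ(ξ) = x_i −_F x_{i+1}, μ_s(ξ) = 0, μ(ξ') = 0, and μ_s(ξ') = x_{i+1} −_F x_i; moreover ξ is the unique element of A with μ(ξ) = x_i −_F x_{i+1} and μ_s(ξ) = 0, and ξ' is the unique element of A with μ(ξ') = 0 and μ_s(ξ') = x_{i+1} −_F x_i. -/

import Mathlib

/- Common setup: substitution of multivariate power series, formal group laws,
formal inverses, and the variable–swapping operation. -/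

open MvPowerSeries Finsupp

noncomputable section

variable {S : Type*} [CommRing S]

/-- Substitution of a family of multivariate power series (each intended to have zero
constant coefficient) into a power series in `k` variables.  When every `a j` has zero
constant coefficient, the coefficient of a monomial `m` of the substituted series only
receives contributions from exponents `d` with `d j ≤ deg m`, so the finite sum below
computes the genuine substitution. -/
noncomputable def msubst {k n : ℕ} (a : Fin k → MvPowerSeries (Fin n) S)
    (F : MvPowerSeries (Fin k) S) : MvPowerSeries (Fin n) S :=
  fun m =>
    ∑ d ∈ Finset.Iic (equivFunOnFinite.symm fun _ : Fin k => m.sum fun _ e => e),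
      MvPowerSeries.coeff (R := S) d F * MvPowerSeries.coeff (R := S) m (∏ j, a j ^ d j)

/-- `F ∈ S[[x,y]]` is a (one-dimensional, commutative) formal group law over `S`:
zero constant coefficient, commutativity `F(x,y) = F(y,x)`, unitality `F(x,0) = x`,
and associativity `F(F(x,y),z) = F(x,F(y,z))`. -/
def IsFormalGroupLaw (F : MvPowerSeries (Fin 2) S) : Prop :=
  MvPowerSeries.constantCoeff (σ := Fin 2) (R := S) F = 0 ∧
  msubst ![(X 1 : MvPowerSeries (Fin 2) S), X 0] F = F ∧
  msubst ![(X 0 : MvPowerSeries (Fin 2) S), 0] F = X 0 ∧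
  msubst ![msubst ![(X 0 : MvPowerSeries (Fin 3) S), X 1] F, X 2] F
    = msubst ![(X 0 : MvPowerSeries (Fin 3) S), msubst ![(X 1 : MvPowerSeries (Fin 3) S), X 2] F] F

/-- `ι ∈ S[[x]]` is the formal inverse of `F`: it has zero constant coefficient
and `F(x, ι(x)) = 0`. -/
def IsFormalInverse (F : MvPowerSeries (Fin 2) S) (ι : MvPowerSeries (Fin 1) S) : Prop :=
  MvPowerSeries.constantCoeff (σ := Fin 1) (R := S) ι = 0 ∧
  msubst ![(X 0 : MvPowerSeries (Fin 1) S), ι] F = 0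

/-- `ι(b)`, the substitution of `b` into the formal inverse `ι`. -/
noncomputable def fneg (ι : MvPowerSeries (Fin 1) S) {n : ℕ}
    (b : MvPowerSeries (Fin n) S) : MvPowerSeries (Fin n) S :=
  msubst ![b] ι

/-- `a −_F b := F(a, ι(b))`. -/
noncomputable def fsub (F : MvPowerSeries (Fin 2) S) (ι : MvPowerSeries (Fin 1) S) {n : ℕ}
    (a b : MvPowerSeries (Fin n) S) : MvPowerSeries (Fin n) S :=
  msubst ![a, fneg ι b] F

/-- Substitution `g(a,b)` of two power series into a two-variable power series `g`. -/
noncomputable def gsub (g : MvPowerSeries (Fin 2) S) {n : ℕ}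
    (a b : MvPowerSeries (Fin n) S) : MvPowerSeries (Fin n) S :=
  msubst ![a, b] g

/-- The map on multivariate power series interchanging the variables `x_i` and `x_j`
(the renaming along the transposition `(i,j)`). -/
def swapVars {n : ℕ} (i j : Fin n) (f : MvPowerSeries (Fin n) S) :
    MvPowerSeries (Fin n) S :=
  fun m => f (equivMapDomain (Equiv.swap i j) m)

theorem swapVars_coeff {n : ℕ} (i j : Fin n) (f : MvPowerSeries (Fin n) S) (m : Fin n →₀ ℕ) :
    MvPowerSeries.coeff (R := S) m (swapVars i j f)
      = MvPowerSeries.coeff (R := S) (equivMapDomain (Equiv.swap i j) m) f := rfl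

theorem equivMapDomain_swap_invol {n : ℕ} (i j : Fin n) (m : Fin n →₀ ℕ) :
    equivMapDomain (Equiv.swap i j) (equivMapDomain (Equiv.swap i j) m) = m := by
  rw [← equivMapDomain_trans, Equiv.swap_swap, equivMapDomain_refl]

theorem equivMapDomain_add' {n : ℕ} (e : Fin n ≃ Fin n) (a b : Fin n →₀ ℕ) :
    equivMapDomain e (a + b) = equivMapDomain e a + equivMapDomain e b := by
  ext x; simp [equivMapDomain_apply]

theorem swapVars_add {n : ℕ} (i j : Fin n) (f h : MvPowerSeries (Fin n) S) :
    swapVars i j (f + h) = swapVars i j f + swapVars i j h := rfl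

theorem swapVars_mul {n : ℕ} (i j : Fin n) (f h : MvPowerSeries (Fin n) S) :
    swapVars i j (f * h) = swapVars i j f * swapVars i j h := by
  ext m
  rw [swapVars_coeff, MvPowerSeries.coeff_mul, MvPowerSeries.coeff_mul]
  refine Finset.sum_nbij'
    (fun p => (equivMapDomain (Equiv.swap i j) p.1, equivMapDomain (Equiv.swap i j) p.2))
    (fun p => (equivMapDomain (Equiv.swap i j) p.1, equivMapDomain (Equiv.swap i j) p.2))
    ?_ ?_ ?_ ?_ ?_
  · intro p hp
    simp only [Finset.HasAntidiagonal.mem_antidiagonal] at hp ⊢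
    rw [← equivMapDomain_add', hp, equivMapDomain_swap_invol]
  · intro p hp
    simp only [Finset.HasAntidiagonal.mem_antidiagonal] at hp ⊢
    rw [← equivMapDomain_add', hp]
  · intro p _; simp [equivMapDomain_swap_invol]
  · intro p _; simp [equivMapDomain_swap_invol]
  · intro p _
    rw [swapVars_coeff, swapVars_coeff, equivMapDomain_swap_invol, equivMapDomain_swap_invol]

theorem swapVars_C {n : ℕ} (i j : Fin n) (s : S) :
    swapVars i j (MvPowerSeries.C (σ := Fin n) (R := S) s) = MvPowerSeries.C (σ := Fin n) (R := S) s := by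
  ext m
  rw [swapVars_coeff, MvPowerSeries.coeff_C, MvPowerSeries.coeff_C]
  by_cases hm : m = 0
  · subst hm; rw [equivMapDomain_zero]
  · rw [if_neg, if_neg hm]
    intro hc
    apply hm
    have := congrArg (equivMapDomain (Equiv.swap i j)) hc
    rwa [equivMapDomain_swap_invol, equivMapDomain_zero] at this

theorem swapVars_one {n : ℕ} (i j : Fin n) :
    swapVars i j (1 : MvPowerSeries (Fin n) S) = 1 := by
  have := swapVars_C (S := S) i j 1
  rwa [map_one] at this

/-- The fixed subalgebra `R^{s_i}` of power series invariant under interchanging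
the variables `x_i` and `x_j`. -/
noncomputable def fixedSubalgebra (S : Type*) [CommRing S] {n : ℕ} (i j : Fin n) :
    Subalgebra S (MvPowerSeries (Fin n) S) where
  carrier := {f | swapVars i j f = f}
  mul_mem' := by
    intro a b ha hb
    simp only [Set.mem_setOf_eq] at *
    rw [swapVars_mul, ha, hb]
  add_mem' := by
    intro a b ha hb
    simp only [Set.mem_setOf_eq] at *
    rw [swapVars_add, ha, hb]
  algebraMap_mem' := fun s => swapVars_C i j s

/-- `s_i` as an algebra homomorphism over the fixed subalgebra. -/
noncomputable def swapAlgHom (S : Type*) [CommRing S] {n : ℕ} (i j : Fin n) :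
    MvPowerSeries (Fin n) S →ₐ[fixedSubalgebra S i j] MvPowerSeries (Fin n) S where
  toFun := swapVars i j
  map_one' := swapVars_one i j
  map_mul' := swapVars_mul i j
  map_zero' := rfl
  map_add' := swapVars_add i j
  commutes' := fun r => r.2

open TensorProduct in
/-- The elementary Bott–Samelson bimodule `A = R ⊗_{R^{s_i}} R`. -/
noncomputable abbrev BSB (S : Type*) [CommRing S] {n : ℕ} (i j : Fin n) : Type _ :=
  (MvPowerSeries (Fin n) S) ⊗[fixedSubalgebra S i j] (MvPowerSeries (Fin n) S)

/-- The multiplication map `μ : A → R`, `r1 ⊗ r2 ↦ r1·r2`. -/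
noncomputable def mulHom (S : Type*) [CommRing S] {n : ℕ} (i j : Fin n) :
    BSB S i j →ₐ[fixedSubalgebra S i j] MvPowerSeries (Fin n) S :=
  Algebra.TensorProduct.productMap (AlgHom.id _ _) (AlgHom.id _ _)

/-- The twisted multiplication map `μ_s : A → R`, `r1 ⊗ r2 ↦ r1·s_i(r2)`. -/
noncomputable def mulsHom (S : Type*) [CommRing S] {n : ℕ} (i j : Fin n) :
    BSB S i j →ₐ[fixedSubalgebra S i j] MvPowerSeries (Fin n) S :=
  Algebra.TensorProduct.productMap (AlgHom.id _ _) (swapAlgHom S i j)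

open TensorProduct in
/-- The element `ξ = x_i⊗1 −_F 1⊗x_{i+1} := (g(x_i,x_j)⁻¹ ⊗ 1)·(1 ⊗ x_i − x_j ⊗ 1)` of `A`. -/
noncomputable def xiElt (g : MvPowerSeries (Fin 2) S) {n : ℕ} (i j : Fin n) : BSB S i j :=
  (Ring.inverse (gsub g (X i) (X j)) ⊗ₜ[fixedSubalgebra S i j] (1 : MvPowerSeries (Fin n) S)) *
    ((1 : MvPowerSeries (Fin n) S) ⊗ₜ[fixedSubalgebra S i j] (X i)
      - (X j) ⊗ₜ[fixedSubalgebra S i j] (1 : MvPowerSeries (Fin n) S))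

open TensorProduct in
/-- The element `ξ' = x_{i+1}⊗1 −_F 1⊗x_{i+1} := (g(x_j,x_i)⁻¹ ⊗ 1)·(1 ⊗ x_i − x_i ⊗ 1)` of `A`. -/
noncomputable def xiElt' (g : MvPowerSeries (Fin 2) S) {n : ℕ} (i j : Fin n) : BSB S i j :=
  (Ring.inverse (gsub g (X j) (X i)) ⊗ₜ[fixedSubalgebra S i j] (1 : MvPowerSeries (Fin n) S)) *
    ((1 : MvPowerSeries (Fin n) S) ⊗ₜ[fixedSubalgebra S i j] (X i)
      - (X i) ⊗ₜ[fixedSubalgebra S i j] (1 : MvPowerSeries (Fin n) S))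

namespace Aux

theorem coeff_Xmul {n : ℕ} (k : Fin n) (f : MvPowerSeries (Fin n) S) (m : Fin n →₀ ℕ) :
    MvPowerSeries.coeff (R := S) m (X k * f)
      = if single k 1 ≤ m then MvPowerSeries.coeff (R := S) (m - single k 1) f else 0 := by
  classical
  rw [X_def, coeff_monomial_mul]
  split_ifs <;> simp

theorem X_sub_X_reg {n : ℕ} {i j : Fin n} (hij : i ≠ j) {v : MvPowerSeries (Fin n) S}
    (h : (X i - X j) * v = 0) : v = 0 := by
  classical
  rw [sub_mul, sub_eq_zero] at h
  have h' : ∀ m : Fin n →₀ ℕ,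
      MvPowerSeries.coeff (R := S) m (X i * v) = MvPowerSeries.coeff (R := S) m (X j * v) :=
    fun m => congrArg (MvPowerSeries.coeff (R := S) m) h
  have key : ∀ N : ℕ, ∀ m : Fin n →₀ ℕ, m j = N → MvPowerSeries.coeff (R := S) m v = 0 := by
    intro N
    induction N with
    | zero =>
      intro m hm
      have h1 := h' (m + single i 1)
      rw [coeff_Xmul, coeff_Xmul, if_pos le_add_self, if_neg, add_tsub_cancel_right] at h1
      · exact h1
      · rw [single_le_iff]
        simp [Finsupp.single_apply, hij, hij.symm, hm]
    | succ N ih =>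
      intro m hm
      have h1 := h' (m + single i 1)
      rw [coeff_Xmul, coeff_Xmul, if_pos le_add_self, if_pos, add_tsub_cancel_right] at h1
      · rw [h1]
        apply ih
        rw [tsub_apply, Finsupp.add_apply, Finsupp.single_apply, Finsupp.single_apply]
        simp [hij, hij.symm, hm]
      · rw [single_le_iff]
        simp [Finsupp.single_apply, hij, hij.symm, hm]
  ext m
  simpa using key (m j) m rfl

end Aux

namespace Aux2
open Aux

variable {n : ℕ}

/-- The finsupp agreeing with `m` except entries `a` at `i` and `b` at `j`. -/
def mset (i j : Fin n) (m : Fin n →₀ ℕ) (a b : ℕ) : Fin n →₀ ℕ :=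
  (m.update i a).update j b

theorem mset_apply_i {i j : Fin n} (hij : i ≠ j) (m : Fin n →₀ ℕ) (a b : ℕ) :
    mset i j m a b i = a := by
  simp [mset, Finsupp.coe_update, Function.update_apply, hij]

theorem mset_apply_j (i j : Fin n) (m : Fin n →₀ ℕ) (a b : ℕ) :
    mset i j m a b j = b := by
  simp [mset, Finsupp.coe_update]

theorem mset_apply_other {i j x : Fin n} (hx : x ≠ i) (hx' : x ≠ j)
    (m : Fin n →₀ ℕ) (a b : ℕ) : mset i j m a b x = m x := by
  simp [mset, Finsupp.coe_update, Function.update_apply, hx, hx']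

theorem mset_eq_self {i j : Fin n} (hij : i ≠ j) (m : Fin n →₀ ℕ) :
    mset i j m (m i) (m j) = m := by
  ext x
  by_cases hx : x = i
  · subst hx; rw [mset_apply_i hij]
  · by_cases hx' : x = j
    · subst hx'; rw [mset_apply_j]
    · rw [mset_apply_other hx hx']

theorem mset_congr {i j : Fin n} (hij : i ≠ j) {m m' : Fin n →₀ ℕ} (a b : ℕ)
    (h : ∀ x, x ≠ i → x ≠ j → m x = m' x) : mset i j m a b = mset i j m' a b := by
  ext x
  by_cases hx : x = i
  · subst hx; rw [mset_apply_i hij, mset_apply_i hij]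
  · by_cases hx' : x = j
    · subst hx'; rw [mset_apply_j, mset_apply_j]
    · rw [mset_apply_other hx hx', mset_apply_other hx hx', h x hx hx']

theorem swap_apply (i j : Fin n) (m : Fin n →₀ ℕ) (x : Fin n) :
    (equivMapDomain (Equiv.swap i j) m) x = m (Equiv.swap i j x) := by
  rw [equivMapDomain_apply, Equiv.symm_swap]

end Aux2

namespace Aux3
open Aux Aux2

variable {n : ℕ}

/-- Explicit quotient of `f - s(f)` by `X i - X j`. -/
def Qdiv (i j : Fin n) (f : MvPowerSeries (Fin n) S) : MvPowerSeries (Fin n) S :=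
  fun m => ∑ k ∈ Finset.range (m j + 1),
    MvPowerSeries.coeff (R := S) (mset i j m (m i + 1 + k) (m j - k)) (f - swapVars i j f)

theorem Qdiv_spec {i j : Fin n} (hij : i ≠ j) (f : MvPowerSeries (Fin n) S) :
    (X i - X j) * Qdiv i j f = f - swapVars i j f := by
  classical
  ext μ
  rw [sub_mul, map_sub, coeff_Xmul, coeff_Xmul]
  set h : MvPowerSeries (Fin n) S := f - swapVars i j f with hh
  set T : ℕ → (Fin n →₀ ℕ) := fun k => mset i j μ (μ i + k) (μ j - k) with hT
  have hTi : ∀ k, T k i = μ i + k := fun k => mset_apply_i hij _ _ _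
  have hTj : ∀ k, T k j = μ j - k := fun k => mset_apply_j _ _ _ _ _
  have hTo : ∀ k, ∀ x, x ≠ i → x ≠ j → T k x = μ x := fun k x hx hx' =>
    mset_apply_other hx hx' _ _ _
  have hμi : (fun₀ | i => 1 : Fin n →₀ ℕ) ≤ μ ↔ 1 ≤ μ i := single_le_iff
  have hμj : (fun₀ | j => 1 : Fin n →₀ ℕ) ≤ μ ↔ 1 ≤ μ j := single_le_iff
  have subi : ∀ x, x ≠ i → (μ - fun₀ | i => 1) x = μ x := by
    intro x hx; rw [tsub_apply, Finsupp.single_apply, if_neg (fun hc => hx hc.symm)]; rfl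
  have subj : ∀ x, x ≠ j → (μ - fun₀ | j => 1) x = μ x := by
    intro x hx; rw [tsub_apply, Finsupp.single_apply, if_neg (fun hc => hx hc.symm)]; rfl
  have F1 : 1 ≤ μ i → MvPowerSeries.coeff (R := S) (μ - fun₀ | i => 1) (Qdiv i j f)
      = ∑ k ∈ Finset.range (μ j + 1), MvPowerSeries.coeff (R := S) (T k) h := by
    intro hi
    have hai : (μ - (fun₀ | i => 1) : Fin n →₀ ℕ) i = μ i - 1 := by
      rw [tsub_apply, Finsupp.single_eq_same]
    show (∑ k ∈ Finset.range ((μ - fun₀ | i => 1) j + 1), _) = _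
    simp only [subi j (Ne.symm hij), hai]
    refine Finset.sum_congr rfl fun k _ => ?_
    refine congrArg (fun t => MvPowerSeries.coeff (R := S) t h) ?_
    rw [mset_congr hij _ _ (fun x hx _ => subi x hx)]
    have hv : μ i - 1 + 1 + k = μ i + k := by omega
    rw [hv]
  have F2 : 1 ≤ μ j → MvPowerSeries.coeff (R := S) (μ - fun₀ | j => 1) (Qdiv i j f)
      = ∑ k ∈ Finset.range (μ j), MvPowerSeries.coeff (R := S) (T (k + 1)) h := by
    intro hj
    have haj : (μ - (fun₀ | j => 1) : Fin n →₀ ℕ) j = μ j - 1 := by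
      rw [tsub_apply, Finsupp.single_eq_same]
    show (∑ k ∈ Finset.range ((μ - fun₀ | j => 1) j + 1), _) = _
    simp only [subj i hij, haj]
    have hr : μ j - 1 + 1 = μ j := by omega
    rw [hr]
    refine Finset.sum_congr rfl fun k _ => ?_
    refine congrArg (fun t => MvPowerSeries.coeff (R := S) t h) ?_
    rw [mset_congr hij _ _ (fun x _ hx => subj x hx)]
    have hv1 : μ i + 1 + k = μ i + (k + 1) := by omega
    have hv2 : μ j - 1 - k = μ j - (k + 1) := by omega
    rw [hv1, hv2]
  have Tswap : μ i = 0 → ∀ k ≤ μ j, equivMapDomain (Equiv.swap i j) (T k) = T (μ j - k) := by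
    intro hi0 k hk
    ext x
    rw [swap_apply]
    by_cases hx : x = i
    · subst hx
      rw [Equiv.swap_apply_left, hTj, hTi, hi0, zero_add]
    · by_cases hx' : x = j
      · subst hx'
        rw [Equiv.swap_apply_right, hTi, hTj, hi0, zero_add]
        omega
      · rw [Equiv.swap_apply_of_ne_of_ne hx hx', hTo _ _ hx hx', hTo _ _ hx hx']
  have hcoeffh : ∀ t : Fin n →₀ ℕ, MvPowerSeries.coeff (R := S) t h
      = MvPowerSeries.coeff (R := S) t f
        - MvPowerSeries.coeff (R := S) (equivMapDomain (Equiv.swap i j) t) f := by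
    intro t
    rw [hh, map_sub]
    rfl
  have F5 : μ i = 0 → ∑ k ∈ Finset.range (μ j + 1), MvPowerSeries.coeff (R := S) (T k) h = 0 := by
    intro hi0
    have : ∀ k ∈ Finset.range (μ j + 1),
        MvPowerSeries.coeff (R := S) (T k) h
          = MvPowerSeries.coeff (R := S) (T k) f - MvPowerSeries.coeff (R := S) (T (μ j - k)) f := by
      intro k hk
      rw [hcoeffh, Tswap hi0 k (by
        simpa using Nat.lt_succ_iff.mp (Finset.mem_range.mp hk))]
    rw [Finset.sum_congr rfl this, Finset.sum_sub_distrib]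
    have := Finset.sum_range_reflect (fun k => MvPowerSeries.coeff (R := S) (T k) f) (μ j + 1)
    simp only [Nat.add_sub_cancel] at this
    rw [this, sub_self]
  have F4 : T 0 = μ := by
    show mset i j μ (μ i + 0) (μ j - 0) = μ
    rw [add_zero, Nat.sub_zero, mset_eq_self hij]
  have F3 : ∑ k ∈ Finset.range (μ j + 1), MvPowerSeries.coeff (R := S) (T k) h
      = (∑ k ∈ Finset.range (μ j), MvPowerSeries.coeff (R := S) (T (k + 1)) h)
        + MvPowerSeries.coeff (R := S) μ h := by
    rw [Finset.sum_range_succ', F4]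
  have F6 : μ i = 0 → μ j = 0 → MvPowerSeries.coeff (R := S) μ h = 0 := by
    intro hi0 hj0
    rw [hcoeffh]
    have : equivMapDomain (Equiv.swap i j) μ = μ := by
      ext x
      rw [swap_apply]
      by_cases hx : x = i
      · subst hx; rw [Equiv.swap_apply_left, hj0, hi0]
      · by_cases hx' : x = j
        · subst hx'; rw [Equiv.swap_apply_right, hi0, hj0]
        · rw [Equiv.swap_apply_of_ne_of_ne hx hx']
    rw [this, sub_self]
  by_cases hi : 1 ≤ μ i <;> by_cases hj : 1 ≤ μ j
  · rw [if_pos (hμi.mpr hi), if_pos (hμj.mpr hj), F1 hi, F2 hj, F3]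
    ring
  · rw [if_pos (hμi.mpr hi), if_neg (fun hc => hj (hμj.mp hc)), F1 hi]
    have hj0 : μ j = 0 := by omega
    rw [hj0]
    simp [F4]
  · rw [if_neg (fun hc => hi (hμi.mp hc)), if_pos (hμj.mpr hj), F2 hj]
    have hi0 : μ i = 0 := by omega
    have h0 := F5 hi0
    rw [F3] at h0
    have h2 : ∑ k ∈ Finset.range (μ j), MvPowerSeries.coeff (R := S) (T (k + 1)) h
        = - MvPowerSeries.coeff (R := S) μ h := eq_neg_of_add_eq_zero_left h0
    rw [h2]
    ring
  · rw [if_neg (fun hc => hi (hμi.mp hc)), if_neg (fun hc => hj (hμj.mp hc)),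
      F6 (by omega) (by omega), sub_self]

end Aux3

namespace Aux4
open Aux Aux2 Aux3
variable {n : ℕ}

theorem swapVars_invol (i j : Fin n) (f : MvPowerSeries (Fin n) S) :
    swapVars i j (swapVars i j f) = f := by
  ext m
  rw [swapVars_coeff, swapVars_coeff, equivMapDomain_swap_invol]

theorem swapVars_sub (i j : Fin n) (f h : MvPowerSeries (Fin n) S) :
    swapVars i j (f - h) = swapVars i j f - swapVars i j h := rfl

theorem swapVars_X_left (i j : Fin n) :
    swapVars i j (X i : MvPowerSeries (Fin n) S) = X j := by
  classical
  ext m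
  rw [swapVars_coeff, MvPowerSeries.coeff_X, MvPowerSeries.coeff_X]
  by_cases hm : m = single j 1
  · subst hm
    rw [if_pos rfl, if_pos]
    rw [equivMapDomain_single, Equiv.swap_apply_right]
  · rw [if_neg hm, if_neg]
    intro hc
    apply hm
    have := congrArg (equivMapDomain (Equiv.swap i j)) hc
    rwa [equivMapDomain_swap_invol, equivMapDomain_single, Equiv.swap_apply_left] at this

theorem swapVars_comm (i j : Fin n) (f : MvPowerSeries (Fin n) S) :
    swapVars i j f = swapVars j i f := by
  unfold swapVars
  rw [Equiv.swap_comm]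

theorem swapVars_X_right (i j : Fin n) :
    swapVars i j (X j : MvPowerSeries (Fin n) S) = X i := by
  rw [swapVars_comm]
  exact swapVars_X_left j i

theorem decomp {i j : Fin n} (hij : i ≠ j) (f : MvPowerSeries (Fin n) S) :
    ∃ p q : MvPowerSeries (Fin n) S,
      swapVars i j p = p ∧ swapVars i j q = q ∧ f = p + q * X i := by
  set q := Qdiv i j f with hqdef
  have hspec : (X i - X j) * q = f - swapVars i j f := Qdiv_spec hij f
  have h2 := congrArg (swapVars i j) hspec
  rw [swapVars_mul, swapVars_sub, swapVars_sub, swapVars_X_left, swapVars_X_right,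
    swapVars_invol] at h2
  have h1 : (X i - X j) * (swapVars i j q - q) = 0 := by
    linear_combination -h2 - hspec
  have hσq : swapVars i j q = q := sub_eq_zero.mp (X_sub_X_reg hij h1)
  refine ⟨f - q * X i, q, ?_, hσq, by ring⟩
  rw [swapVars_sub, swapVars_mul, hσq, swapVars_X_left]
  linear_combination hspec

end Aux4


namespace Aux5
open Aux
variable {n : ℕ}

/-- Restriction of a multi-index to the two coordinates `i`, `j`. -/
def pull (i j : Fin n) (m : Fin n →₀ ℕ) : Fin 2 →₀ ℕ :=
  single 0 (m i) + single 1 (m j)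

/-- Extension of a two-variable multi-index along coordinates `i`, `j`. -/
def push (i j : Fin n) (d : Fin 2 →₀ ℕ) : Fin n →₀ ℕ :=
  single i (d 0) + single j (d 1)

theorem pull_apply_0 (i j : Fin n) (m : Fin n →₀ ℕ) : pull i j m 0 = m i := by
  simp [pull, Finsupp.single_apply]

theorem pull_apply_1 (i j : Fin n) (m : Fin n →₀ ℕ) : pull i j m 1 = m j := by
  simp [pull, Finsupp.single_apply]

theorem push_apply_i {i j : Fin n} (hij : i ≠ j) (d : Fin 2 →₀ ℕ) : push i j d i = d 0 := by
  simp [push, Finsupp.single_apply, hij, hij.symm]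

theorem push_apply_j {i j : Fin n} (hij : i ≠ j) (d : Fin 2 →₀ ℕ) : push i j d j = d 1 := by
  simp [push, Finsupp.single_apply, hij, hij.symm]

theorem push_apply_other {i j x : Fin n} (hx : x ≠ i) (hx' : x ≠ j) (d : Fin 2 →₀ ℕ) :
    push i j d x = 0 := by
  simp [push, Finsupp.single_apply, hx.symm, hx'.symm]

theorem pull_add (i j : Fin n) (m m' : Fin n →₀ ℕ) :
    pull i j (m + m') = pull i j m + pull i j m' := by
  unfold pull
  rw [Finsupp.add_apply, Finsupp.add_apply, Finsupp.single_add, Finsupp.single_add]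
  abel

theorem push_add (i j : Fin n) (d e : Fin 2 →₀ ℕ) :
    push i j (d + e) = push i j d + push i j e := by
  unfold push
  rw [Finsupp.add_apply, Finsupp.add_apply, Finsupp.single_add, Finsupp.single_add]
  abel

theorem pull_push {i j : Fin n} (hij : i ≠ j) (d : Fin 2 →₀ ℕ) :
    pull i j (push i j d) = d := by
  ext x
  fin_cases x
  · rw [show ((⟨0, by omega⟩ : Fin 2)) = 0 from rfl, pull_apply_0, push_apply_i hij]
  · rw [show ((⟨1, by omega⟩ : Fin 2)) = 1 from rfl, pull_apply_1, push_apply_j hij]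

theorem supp_iff {i j : Fin n} (hij : i ≠ j) (m : Fin n →₀ ℕ) :
    m = push i j (pull i j m) ↔ ∀ x, x ≠ i → x ≠ j → m x = 0 := by
  constructor
  · intro h x hx hx'
    calc m x = push i j (pull i j m) x := by rw [← h]
    _ = 0 := push_apply_other hx hx' _
  · intro h
    ext x
    by_cases hx : x = i
    · subst hx; rw [push_apply_i hij, pull_apply_0]
    · by_cases hx' : x = j
      · subst hx'; rw [push_apply_j hij, pull_apply_1]
      · rw [push_apply_other hx hx', h x hx hx']

theorem push_pull_push {i j : Fin n} (hij : i ≠ j) (d : Fin 2 →₀ ℕ) :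
    push i j d = push i j (pull i j (push i j d)) := by
  rw [pull_push hij]

theorem supp_of_le {i j : Fin n} (hij : i ≠ j) {p m : Fin n →₀ ℕ}
    (hpm : ∀ x, p x ≤ m x) (hm : m = push i j (pull i j m)) :
    p = push i j (pull i j p) := by
  rw [supp_iff hij] at hm ⊢
  intro x hx hx'
  have h1 := hpm x
  rw [hm x hx hx'] at h1
  omega

/-- Extension of a two-variable power series along the variables `x_i`, `x_j`. -/
def emb2Fun (i j : Fin n) (f : MvPowerSeries (Fin 2) S) : MvPowerSeries (Fin n) S :=
  fun m => if m = push i j (pull i j m) then MvPowerSeries.coeff (R := S) (pull i j m) f else 0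

theorem coeff_emb2Fun (i j : Fin n) (f : MvPowerSeries (Fin 2) S) (m : Fin n →₀ ℕ) :
    MvPowerSeries.coeff (R := S) m (emb2Fun i j f)
      = if m = push i j (pull i j m) then MvPowerSeries.coeff (R := S) (pull i j m) f else 0 := rfl

theorem coeff_emb2Fun_push {i j : Fin n} (hij : i ≠ j) (f : MvPowerSeries (Fin 2) S)
    (d : Fin 2 →₀ ℕ) :
    MvPowerSeries.coeff (R := S) (push i j d) (emb2Fun i j f) = MvPowerSeries.coeff (R := S) d f := by
  rw [coeff_emb2Fun, if_pos (push_pull_push hij d), pull_push hij]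

theorem emb2Fun_sub (i j : Fin n) (f h : MvPowerSeries (Fin 2) S) :
    emb2Fun i j (f - h) = emb2Fun i j f - emb2Fun i j h := by
  ext m
  rw [map_sub, coeff_emb2Fun, coeff_emb2Fun, coeff_emb2Fun]
  split_ifs
  · rw [map_sub]
  · rw [sub_zero]

theorem emb2Fun_one {i j : Fin n} (hij : i ≠ j) :
    emb2Fun i j (1 : MvPowerSeries (Fin 2) S) = 1 := by
  classical
  ext m
  rw [coeff_emb2Fun, MvPowerSeries.coeff_one, MvPowerSeries.coeff_one]
  by_cases hm : m = 0
  · subst hm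
    simp [pull, push]
  · rw [if_neg hm]
    split_ifs with h1 h2
    · exfalso
      apply hm
      rw [h1, h2]
      unfold push
      simp
    · rfl
    · rfl

theorem emb2Fun_mul {i j : Fin n} (hij : i ≠ j) (f h : MvPowerSeries (Fin 2) S) :
    emb2Fun i j (f * h) = emb2Fun i j f * emb2Fun i j h := by
  classical
  ext m
  rw [coeff_emb2Fun, MvPowerSeries.coeff_mul]
  by_cases hm : m = push i j (pull i j m)
  · rw [if_pos hm, MvPowerSeries.coeff_mul]
    refine Finset.sum_nbij' (fun p => (push i j p.1, push i j p.2))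
      (fun p => (pull i j p.1, pull i j p.2)) ?_ ?_ ?_ ?_ ?_
    · intro p hp
      rw [Finset.HasAntidiagonal.mem_antidiagonal] at hp ⊢
      rw [← push_add, hp, ← hm]
    · intro p hp
      rw [Finset.HasAntidiagonal.mem_antidiagonal] at hp ⊢
      rw [← pull_add, hp]
    · intro p hp
      show (pull i j (push i j p.1), pull i j (push i j p.2)) = p
      rw [pull_push hij, pull_push hij]
    · intro p hp
      rw [Finset.HasAntidiagonal.mem_antidiagonal] at hp
      have h1 : p.1 = push i j (pull i j p.1) := by
        refine supp_of_le hij (fun x => ?_) hm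
        rw [← hp, Finsupp.add_apply]
        omega
      have h2 : p.2 = push i j (pull i j p.2) := by
        refine supp_of_le hij (fun x => ?_) hm
        rw [← hp, Finsupp.add_apply]
        omega
      show (push i j (pull i j p.1), push i j (pull i j p.2)) = p
      rw [← h1, ← h2]
    · intro p hp
      rw [coeff_emb2Fun_push hij, coeff_emb2Fun_push hij]
  · rw [if_neg hm]
    symm
    apply Finset.sum_eq_zero
    intro p hp
    simp only [Finset.HasAntidiagonal.mem_antidiagonal] at hp
    by_cases h1 : p.1 = push i j (pull i j p.1)
    · by_cases h2 : p.2 = push i j (pull i j p.2)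
      · exfalso
        apply hm
        rw [← hp]
        rw [supp_iff hij] at h1 h2 ⊢
        intro x hx hx'
        rw [Finsupp.add_apply, h1 x hx hx', h2 x hx hx']
      · rw [coeff_emb2Fun i j h, if_neg h2, mul_zero]
    · rw [coeff_emb2Fun i j f, if_neg h1, zero_mul]

theorem emb2Fun_pow {i j : Fin n} (hij : i ≠ j) (f : MvPowerSeries (Fin 2) S) (k : ℕ) :
    emb2Fun i j (f ^ k) = emb2Fun i j f ^ k := by
  induction k with
  | zero => rw [pow_zero, pow_zero, emb2Fun_one hij]
  | succ k ih => rw [pow_succ, pow_succ, emb2Fun_mul hij, ih]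

end Aux5


namespace Aux6
open Aux Aux5
variable {n : ℕ}

theorem le_msum (m : Fin n →₀ ℕ) (x : Fin n) : m x ≤ m.sum fun _ e => e := by
  by_cases h : m x = 0
  · simp [h]
  · exact Finset.single_le_sum (fun k _ => Nat.zero_le _) (Finsupp.mem_support_iff.mpr h)

theorem sum_pull (i j : Fin n) (m : Fin n →₀ ℕ) :
    ((pull i j m).sum fun _ e => e) = m i + m j := by
  unfold pull
  rw [Finsupp.sum_add_index' (fun _ => rfl) (fun _ _ _ => rfl),
    Finsupp.sum_single_index rfl, Finsupp.sum_single_index rfl]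

theorem sum_supp {i j : Fin n} {m : Fin n →₀ ℕ} (hm : m = push i j (pull i j m)) :
    (m.sum fun _ e => e) = m i + m j := by
  conv_lhs => rw [hm]
  unfold push
  rw [Finsupp.sum_add_index' (fun _ => rfl) (fun _ _ _ => rfl),
    Finsupp.sum_single_index rfl, Finsupp.sum_single_index rfl, pull_apply_0, pull_apply_1]

theorem emb2Fun_prod {i j : Fin n} (hij : i ≠ j) {α : Type*} (s : Finset α)
    (c : α → MvPowerSeries (Fin 2) S) :
    emb2Fun i j (∏ t ∈ s, c t) = ∏ t ∈ s, emb2Fun i j (c t) := by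
  classical
  induction s using Finset.induction with
  | empty => simpa using emb2Fun_one hij
  | insert _ _ hx ih => rw [Finset.prod_insert hx, Finset.prod_insert hx, emb2Fun_mul hij, ih]

theorem emb2Fun_msubst {i j : Fin n} (hij : i ≠ j) {k : ℕ}
    (b : Fin k → MvPowerSeries (Fin 2) S) (F : MvPowerSeries (Fin k) S) :
    emb2Fun i j (msubst b F) = msubst (fun t => emb2Fun i j (b t)) F := by
  classical
  have hprod : ∀ d : Fin k →₀ ℕ,
      (∏ t, emb2Fun i j (b t) ^ d t) = emb2Fun i j (∏ t, b t ^ d t) := by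
    intro d
    rw [emb2Fun_prod hij]
    exact Finset.prod_congr rfl fun t _ => (emb2Fun_pow hij _ _).symm
  ext m
  rw [coeff_emb2Fun]
  by_cases hm : m = push i j (pull i j m)
  · rw [if_pos hm]
    show (msubst b F) (pull i j m) = (msubst (fun t => emb2Fun i j (b t)) F) m
    unfold msubst
    have hbound : (equivFunOnFinite.symm fun _ : Fin k => (pull i j m).sum fun _ e => e)
        = (equivFunOnFinite.symm fun _ : Fin k => m.sum fun _ e => e) := by
      congr 1
      funext t
      rw [sum_pull, sum_supp hm]
    rw [hbound]
    refine Finset.sum_congr rfl fun d _ => ?_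
    rw [hprod d, coeff_emb2Fun, if_pos hm]
  · rw [if_neg hm]
    show (0 : S) = (msubst (fun t => emb2Fun i j (b t)) F) m
    unfold msubst
    symm
    apply Finset.sum_eq_zero
    intro d _
    rw [hprod d, coeff_emb2Fun, if_neg hm, mul_zero]

theorem emb2Fun_X0 {i j : Fin n} (hij : i ≠ j) :
    emb2Fun i j (X 0 : MvPowerSeries (Fin 2) S) = X i := by
  classical
  have hpull : pull i j (single i 1 : Fin n →₀ ℕ) = single 0 1 := by
    unfold pull
    rw [Finsupp.single_eq_same, Finsupp.single_eq_of_ne hij.symm, Finsupp.single_zero, add_zero]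
  have hpush : push i j (single 0 1 : Fin 2 →₀ ℕ) = single i 1 := by
    unfold push
    rw [Finsupp.single_eq_same, Finsupp.single_eq_of_ne (show (1 : Fin 2) ≠ 0 by decide),
      Finsupp.single_zero, add_zero]
  ext m
  rw [coeff_emb2Fun]
  by_cases hm : m = single i 1
  · subst hm
    rw [if_pos (by rw [hpull, hpush] : (single i 1 : Fin n →₀ ℕ) = _), MvPowerSeries.coeff_X,
      if_pos hpull, MvPowerSeries.coeff_X, if_pos rfl]
  · have hz : MvPowerSeries.coeff (R := S) m (X i : MvPowerSeries (Fin n) S) = 0 := by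
      rw [MvPowerSeries.coeff_X, if_neg hm]
    rw [hz]
    by_cases h1 : m = push i j (pull i j m)
    · rw [if_pos h1, MvPowerSeries.coeff_X, if_neg]
      intro hc
      exact hm (by rw [h1, hc, hpush])
    · rw [if_neg h1]

theorem emb2Fun_X1 {i j : Fin n} (hij : i ≠ j) :
    emb2Fun i j (X 1 : MvPowerSeries (Fin 2) S) = X j := by
  classical
  have hpull : pull i j (single j 1 : Fin n →₀ ℕ) = single 1 1 := by
    unfold pull
    rw [Finsupp.single_eq_same, Finsupp.single_eq_of_ne hij, Finsupp.single_zero, zero_add]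
  have hpush : push i j (single 1 1 : Fin 2 →₀ ℕ) = single j 1 := by
    unfold push
    rw [Finsupp.single_eq_same, Finsupp.single_eq_of_ne (show (0 : Fin 2) ≠ 1 by decide),
      Finsupp.single_zero, zero_add]
  ext m
  rw [coeff_emb2Fun]
  by_cases hm : m = single j 1
  · subst hm
    rw [if_pos (by rw [hpull, hpush] : (single j 1 : Fin n →₀ ℕ) = _), MvPowerSeries.coeff_X,
      if_pos hpull, MvPowerSeries.coeff_X, if_pos rfl]
  · have hz : MvPowerSeries.coeff (R := S) m (X j : MvPowerSeries (Fin n) S) = 0 := by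
      rw [MvPowerSeries.coeff_X, if_neg hm]
    rw [hz]
    by_cases h1 : m = push i j (pull i j m)
    · rw [if_pos h1, MvPowerSeries.coeff_X, if_neg]
      intro hc
      exact hm (by rw [h1, hc, hpush])
    · rw [if_neg h1]

theorem msubst_XX {i j : Fin n} (hij : i ≠ j) (F : MvPowerSeries (Fin 2) S) :
    msubst ![(X i : MvPowerSeries (Fin n) S), X j] F = emb2Fun i j F := by
  classical
  have hprod : ∀ d : Fin 2 →₀ ℕ,
      (∏ t, (![(X i : MvPowerSeries (Fin n) S), X j] t) ^ d t)
        = MvPowerSeries.monomial (R := S) (push i j d) 1 := by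
    intro d
    rw [Fin.prod_univ_two]
    simp only [Matrix.cons_val_zero, Matrix.cons_val_one, Matrix.head_cons]
    rw [X_pow_eq, X_pow_eq, monomial_mul_monomial, one_mul]
    rfl
  ext m
  rw [coeff_emb2Fun]
  show (∑ d ∈ Finset.Iic (equivFunOnFinite.symm fun _ : Fin 2 => m.sum fun _ e => e),
      MvPowerSeries.coeff (R := S) d F
        * MvPowerSeries.coeff (R := S) m (∏ t, (![(X i : MvPowerSeries (Fin n) S), X j] t) ^ d t)) = _
  by_cases hm : m = push i j (pull i j m)
  · rw [if_pos hm]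
    have hterm : ∀ d ∈ Finset.Iic (equivFunOnFinite.symm fun _ : Fin 2 => m.sum fun _ e => e),
        MvPowerSeries.coeff (R := S) d F
            * MvPowerSeries.coeff (R := S) m (∏ t, (![(X i : MvPowerSeries (Fin n) S), X j] t) ^ d t)
          = if d = pull i j m then MvPowerSeries.coeff (R := S) d F else 0 := by
      intro d _
      rw [hprod d, MvPowerSeries.coeff_monomial]
      by_cases hd : m = push i j d
      · rw [if_pos hd, mul_one, if_pos (by rw [hd, pull_push hij])]
      · rw [if_neg hd, mul_zero, if_neg]
        intro hc
        apply hd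
        rw [hc, ← hm]
    rw [Finset.sum_congr rfl hterm, Finset.sum_ite_eq']
    rw [if_pos]
    rw [Finset.mem_Iic]
    intro t
    fin_cases t
    · show pull i j m 0 ≤ _
      rw [pull_apply_0]
      exact le_msum m i
    · show pull i j m 1 ≤ _
      rw [pull_apply_1]
      exact le_msum m j
  · rw [if_neg hm]
    apply Finset.sum_eq_zero
    intro d _
    rw [hprod d, MvPowerSeries.coeff_monomial]
    rw [if_neg, mul_zero]
    intro hc
    exact hm (by rw [hc, pull_push hij])

end Aux6


set_option synthInstance.maxHeartbeats 1000000
set_option maxHeartbeats 1000000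

namespace Aux7
open Aux Aux4 Aux5 Aux6
variable {n : ℕ}

theorem emb2Fun_fneg {i j : Fin n} (hij : i ≠ j) (ι : MvPowerSeries (Fin 1) S) :
    emb2Fun i j (fneg ι (X 1)) = fneg ι (X j) := by
  unfold fneg
  rw [emb2Fun_msubst hij]
  have hb : (fun t => emb2Fun i j (![(X 1 : MvPowerSeries (Fin 2) S)] t))
      = ![(X j : MvPowerSeries (Fin n) S)] := by
    funext t
    have ht : t = 0 := Subsingleton.elim t 0
    subst ht
    simp only [Matrix.cons_val_zero]
    exact emb2Fun_X1 hij
  rw [hb]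

theorem emb2Fun_fsub {i j : Fin n} (hij : i ≠ j) (F : MvPowerSeries (Fin 2) S)
    (ι : MvPowerSeries (Fin 1) S) :
    emb2Fun i j (fsub F ι (X 0) (X 1)) = fsub F ι (X i) (X j) := by
  unfold fsub
  rw [emb2Fun_msubst hij]
  have hb : (fun t => emb2Fun i j
        (![(X 0 : MvPowerSeries (Fin 2) S), fneg ι (X 1)] t))
      = ![(X i : MvPowerSeries (Fin n) S), fneg ι (X j)] := by
    funext t
    fin_cases t
    · simp only [Fin.zero_eta, Matrix.cons_val_zero]
      exact emb2Fun_X0 hij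
    · simp only [Fin.mk_one, Matrix.cons_val_one, Matrix.head_cons]
      exact emb2Fun_fneg hij ι
  rw [hb]

theorem key_identity {i j : Fin n} (hij : i ≠ j)
    (F g : MvPowerSeries (Fin 2) S) (ι : MvPowerSeries (Fin 1) S)
    (hg : (X 0 : MvPowerSeries (Fin 2) S) - X 1 = fsub F ι (X 0) (X 1) * g) :
    (X i : MvPowerSeries (Fin n) S) - X j
      = fsub F ι (X i) (X j) * gsub g (X i) (X j) := by
  have h := congrArg (emb2Fun i j) hg
  rw [emb2Fun_sub, emb2Fun_mul hij, emb2Fun_X0 hij, emb2Fun_X1 hij, emb2Fun_fsub hij] at h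
  rw [h]
  unfold gsub
  rw [msubst_XX hij]

theorem isUnit_emb2Fun {i j : Fin n} (hij : i ≠ j) {g : MvPowerSeries (Fin 2) S}
    (hgu : IsUnit g) : IsUnit (emb2Fun i j g) := by
  obtain ⟨u, rfl⟩ := hgu
  exact IsUnit.of_mul_eq_one (emb2Fun i j ↑u⁻¹)
    (by rw [← emb2Fun_mul hij, Units.mul_inv, emb2Fun_one hij])

theorem isUnit_gsub {i j : Fin n} (hij : i ≠ j) {g : MvPowerSeries (Fin 2) S}
    (hgu : IsUnit g) : IsUnit (gsub g (X i : MvPowerSeries (Fin n) S) (X j)) := by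
  unfold gsub
  rw [msubst_XX hij]
  exact isUnit_emb2Fun hij hgu

theorem mulHom_tmul (i j : Fin n) (a b : MvPowerSeries (Fin n) S) :
    mulHom S i j (a ⊗ₜ[fixedSubalgebra S i j] b) = a * b := by
  unfold mulHom
  rfl

theorem mulsHom_tmul (i j : Fin n) (a b : MvPowerSeries (Fin n) S) :
    mulsHom S i j (a ⊗ₜ[fixedSubalgebra S i j] b) = a * swapVars i j b := by
  unfold mulsHom
  rfl

theorem repr_BSB {i j : Fin n} (hij : i ≠ j) (b : BSB S i j) :
    ∃ u v : MvPowerSeries (Fin n) S,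
      b = u ⊗ₜ[fixedSubalgebra S i j] 1 + v ⊗ₜ[fixedSubalgebra S i j] (X i) := by
  induction b using TensorProduct.induction_on with
  | zero => exact ⟨0, 0, by simp⟩
  | tmul r t =>
    obtain ⟨p, q, hp, hq, ht⟩ := Aux4.decomp (S := S) hij t
    refine ⟨p * r, q * r, ?_⟩
    rw [ht, TensorProduct.tmul_add]
    congr 1
    · calc r ⊗ₜ[fixedSubalgebra S i j] p
          = r ⊗ₜ[fixedSubalgebra S i j]
            ((⟨p, hp⟩ : fixedSubalgebra S i j) • (1 : MvPowerSeries (Fin n) S)) := by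
            rw [Subalgebra.smul_def, smul_eq_mul, mul_one]
      _ = (⟨p, hp⟩ : fixedSubalgebra S i j)
            • (r ⊗ₜ[fixedSubalgebra S i j] (1 : MvPowerSeries (Fin n) S)) :=
            TensorProduct.tmul_smul _ _ _
      _ = ((⟨p, hp⟩ : fixedSubalgebra S i j) • r) ⊗ₜ[fixedSubalgebra S i j]
            (1 : MvPowerSeries (Fin n) S) := TensorProduct.smul_tmul' _ _ _
      _ = (p * r) ⊗ₜ[fixedSubalgebra S i j] (1 : MvPowerSeries (Fin n) S) := by
            rw [Subalgebra.smul_def, smul_eq_mul]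
    · calc r ⊗ₜ[fixedSubalgebra S i j] (q * X i)
          = r ⊗ₜ[fixedSubalgebra S i j]
            ((⟨q, hq⟩ : fixedSubalgebra S i j) • (X i : MvPowerSeries (Fin n) S)) := by
            rw [Subalgebra.smul_def, smul_eq_mul]
      _ = (⟨q, hq⟩ : fixedSubalgebra S i j)
            • (r ⊗ₜ[fixedSubalgebra S i j] (X i : MvPowerSeries (Fin n) S)) :=
            TensorProduct.tmul_smul _ _ _
      _ = ((⟨q, hq⟩ : fixedSubalgebra S i j) • r) ⊗ₜ[fixedSubalgebra S i j]
            (X i : MvPowerSeries (Fin n) S) := TensorProduct.smul_tmul' _ _ _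
      _ = (q * r) ⊗ₜ[fixedSubalgebra S i j] (X i : MvPowerSeries (Fin n) S) := by
            rw [Subalgebra.smul_def, smul_eq_mul]
  | add x y ihx ihy =>
    obtain ⟨u1, v1, h1⟩ := ihx
    obtain ⟨u2, v2, h2⟩ := ihy
    refine ⟨u1 + u2, v1 + v2, ?_⟩
    rw [h1, h2, TensorProduct.add_tmul, TensorProduct.add_tmul]
    abel

theorem ker_zero {i j : Fin n} (hij : i ≠ j) (b : BSB S i j)
    (h1 : mulHom S i j b = 0) (h2 : mulsHom S i j b = 0) : b = 0 := by
  obtain ⟨u, v, rfl⟩ := repr_BSB hij b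
  rw [map_add, mulHom_tmul, mulHom_tmul, mul_one] at h1
  rw [map_add, mulsHom_tmul, mulsHom_tmul, swapVars_one, mul_one, swapVars_X_left] at h2
  have hv : (X i - X j) * v = 0 := by linear_combination h1 - h2
  have hv0 : v = 0 := X_sub_X_reg hij hv
  rw [hv0, zero_mul, add_zero] at h1
  rw [h1, hv0, TensorProduct.zero_tmul, TensorProduct.zero_tmul, add_zero]

end Aux7


open TensorProduct

/-- the elements `ξ, ξ' ∈ A = R ⊗_{R^{s_i}} R` satisfy
`μ(ξ) = x_i −_F x_{i+1}`, `μ_s(ξ) = 0`, `μ(ξ') = 0`, `μ_s(ξ') = x_{i+1} −_F x_i`,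
and each is uniquely determined by its pair of images. -/
theorem xi_xi'_characterization
    (F : MvPowerSeries (Fin 2) S) (hF : IsFormalGroupLaw F)
    (ι : MvPowerSeries (Fin 1) S) (hι : IsFormalInverse F ι)
    (g : MvPowerSeries (Fin 2) S)
    (hg : (X 0 : MvPowerSeries (Fin 2) S) - X 1 = fsub F ι (X 0) (X 1) * g)
    (hgu : IsUnit g)
    {n : ℕ} (i j : Fin n) (hij : (i : ℕ) + 1 = (j : ℕ)) :
    mulHom S i j (xiElt g i j) = fsub F ι (X i) (X j) ∧
    mulsHom S i j (xiElt g i j) = 0 ∧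
    mulHom S i j (xiElt' g i j) = 0 ∧
    mulsHom S i j (xiElt' g i j) = fsub F ι (X j) (X i) ∧
    (∀ a : BSB S i j,
        mulHom S i j a = fsub F ι (X i) (X j) → mulsHom S i j a = 0 → a = xiElt g i j) ∧
    (∀ a : BSB S i j,
        mulHom S i j a = 0 → mulsHom S i j a = fsub F ι (X j) (X i) → a = xiElt' g i j) := by
  classical
  have hij' : i ≠ j := fun hc => by rw [hc] at hij; omega
  have key1 : (X i : MvPowerSeries (Fin n) S) - X j
      = fsub F ι (X i) (X j) * gsub g (X i) (X j) := Aux7.key_identity hij' F g ι hg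
  have key2 : (X j : MvPowerSeries (Fin n) S) - X i
      = fsub F ι (X j) (X i) * gsub g (X j) (X i) := Aux7.key_identity hij'.symm F g ι hg
  have hGu : IsUnit (gsub g (X i : MvPowerSeries (Fin n) S) (X j)) := Aux7.isUnit_gsub hij' hgu
  have hGu' : IsUnit (gsub g (X j : MvPowerSeries (Fin n) S) (X i)) :=
    Aux7.isUnit_gsub hij'.symm hgu
  have c1 : mulHom S i j (xiElt g i j) = fsub F ι (X i) (X j) := by
    unfold xiElt
    rw [map_mul, map_sub, Aux7.mulHom_tmul, Aux7.mulHom_tmul, Aux7.mulHom_tmul,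
      mul_one, one_mul, mul_one, key1,
      mul_comm (fsub F ι (X i) (X j)) (gsub g (X i) (X j)), ← mul_assoc,
      Ring.inverse_mul_cancel _ hGu, one_mul]
  have c2 : mulsHom S i j (xiElt g i j) = 0 := by
    unfold xiElt
    rw [map_mul, map_sub, Aux7.mulsHom_tmul, Aux7.mulsHom_tmul, Aux7.mulsHom_tmul,
      swapVars_one, Aux4.swapVars_X_left, mul_one, one_mul, mul_one, sub_self, mul_zero]
  have c3 : mulHom S i j (xiElt' g i j) = 0 := by
    unfold xiElt'
    rw [map_mul, map_sub, Aux7.mulHom_tmul, Aux7.mulHom_tmul, Aux7.mulHom_tmul,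
      mul_one, one_mul, mul_one, sub_self, mul_zero]
  have c4 : mulsHom S i j (xiElt' g i j) = fsub F ι (X j) (X i) := by
    unfold xiElt'
    rw [map_mul, map_sub, Aux7.mulsHom_tmul, Aux7.mulsHom_tmul, Aux7.mulsHom_tmul,
      swapVars_one, Aux4.swapVars_X_left, mul_one, one_mul, mul_one, key2,
      mul_comm (fsub F ι (X j) (X i)) (gsub g (X j) (X i)), ← mul_assoc,
      Ring.inverse_mul_cancel _ hGu', one_mul]
  refine ⟨c1, c2, c3, c4, ?_, ?_⟩
  · intro a h1 h2
    have hz : a - xiElt g i j = 0 := by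
      refine Aux7.ker_zero hij' _ ?_ ?_
      · rw [map_sub, h1, c1, sub_self]
      · rw [map_sub, h2, c2, sub_self]
    exact sub_eq_zero.mp hz
  · intro a h1 h2
    have hz : a - xiElt' g i j = 0 := by
      refine Aux7.ker_zero hij' _ ?_ ?_
      · rw [map_sub, h1, c3, sub_self]
      · rw [map_sub, h2, c4, sub_self]
    exact sub_eq_zero.mp hz

end
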